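/- Suppose c' ≥ 0 and x̄ = (x̄_{i,2^j}) with x̄_{i,2^j} ∈ [0,1] for i ∈ {1,…,n}, j ∈ {0,…,L} satisfies: ∑_{j=0}^{L} x̄_{i,2^j} ≤ 1 for every i, and ∑_{i=1}^{n} ∑_{j'=0}^{j} x̄_{i,2^{j'}}·m_{i,2^{j+1}} ≤ c'·2^j for every j ∈ {0,…,L}. Define x̂_{i,t} = x̄_{i,2^j}/2^j for every j ∈ {0,…,L} and every t with 2^j ≤ t < 2^{j+1}. Then: each x̂_{i,t} ∈ [0,1]; ∑_{t=1}^{2B−1} x̂_{i,t} ≤ 1 for every i; ∑_{i=1}^{n} ∑_{t'=1}^{t} x̂_{i,t'}·m_{i,t} ≤ c'·t for every t ∈ {1,…,2B−1}; and ∑_{i=1}^{n} ∑_{t=1}^{2B−1} ER_{i,t}·x̂_{i,t} ≥ ∑_{i=1}^{n} ∑_{j=0}^{L} ER_{i,2^{j+1}}·x̄_{i,2^j}, i.e., the expanded solution x̂ is feasible (with the same constant c') and its objective value is at least as large as that of x̄. -/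
import Mathlib
open Finset

private lemma pow_split (f : ℕ → ℝ) (K : ℕ) :
    ∑ t ∈ Ioc 0 (2 ^ (K + 1) - 1), f t
      = ∑ j ∈ Icc 0 K, ∑ t ∈ Ioc (2 ^ j - 1) (2 ^ (j + 1) - 1), f t := by
  induction K with
  | zero => norm_num
  | succ K ih =>
    rw [Finset.sum_Icc_succ_top (Nat.zero_le _), ← ih,
      Finset.sum_Ioc_consecutive f (Nat.zero_le _)
        (by have : (2:ℕ) ^ (K + 1) ≤ 2 ^ (K + 2) := Nat.pow_le_pow_right (by norm_num) (by omega)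
            have : (1:ℕ) ≤ 2 ^ (K + 1) := Nat.one_le_two_pow
            omega)]

/-- Expanding the polynomial-size LP solution `x̄` back into a
time-indexed solution `x̂` preserves feasibility (with the same constant `c'`)
and does not decrease the objective value. -/
theorem stmt_1 (n L B : ℕ) (hB : B = 2 ^ L)
    (ER m : ℕ → ℕ → ℝ)
    (hER_nonneg : ∀ i ∈ Icc 1 n, ∀ t ∈ Icc 1 (2 * B), 0 ≤ ER i t)
    (hER_mono : ∀ i ∈ Icc 1 n, ∀ t ∈ Icc 1 (2 * B), ∀ t' ∈ Icc 1 (2 * B), t ≤ t' → ER i t' ≤ ER i t)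
    (hm_nonneg : ∀ i ∈ Icc 1 n, ∀ t ∈ Icc 1 (2 * B), 0 ≤ m i t)
    (hm_mono : ∀ i ∈ Icc 1 n, ∀ t ∈ Icc 1 (2 * B), ∀ t' ∈ Icc 1 (2 * B), t ≤ t' → m i t ≤ m i t')
    (c' : ℝ) (hc' : 0 ≤ c')
    (xbar : ℕ → ℕ → ℝ)
    (hxbar01 : ∀ i ∈ Icc 1 n, ∀ j ∈ Icc 0 L, xbar i j ∈ Set.Icc (0 : ℝ) 1)
    (hxbarsum : ∀ i ∈ Icc 1 n, ∑ j ∈ Icc 0 L, xbar i j ≤ 1)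
    (hxbarload : ∀ j ∈ Icc 0 L, ∑ i ∈ Icc 1 n, ∑ j' ∈ Icc 0 j, xbar i j' * m i (2 ^ (j + 1))
        ≤ c' * (2 : ℝ) ^ j)
    (xhat : ℕ → ℕ → ℝ)
    (hxhat : ∀ i, ∀ j ≤ L, ∀ t, 2 ^ j ≤ t → t < 2 ^ (j + 1) → xhat i t = xbar i j / 2 ^ j) :
    (∀ i ∈ Icc 1 n, ∀ t ∈ Icc 1 (2 * B - 1), xhat i t ∈ Set.Icc (0 : ℝ) 1) ∧
    (∀ i ∈ Icc 1 n, ∑ t ∈ Icc 1 (2 * B - 1), xhat i t ≤ 1) ∧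
    (∀ t ∈ Icc 1 (2 * B - 1), ∑ i ∈ Icc 1 n, ∑ t' ∈ Icc 1 t, xhat i t' * m i t ≤ c' * (t : ℝ)) ∧
    (∑ i ∈ Icc 1 n, ∑ j ∈ Icc 0 L, ER i (2 ^ (j + 1)) * xbar i j
        ≤ ∑ i ∈ Icc 1 n, ∑ t ∈ Icc 1 (2 * B - 1), ER i t * xhat i t) := by
  subst hB
  have h2L : 2 * 2 ^ L = 2 ^ (L + 1) := by rw [pow_succ]; ring
  have hIcc : ∀ N : ℕ, Icc 1 N = Ioc 0 N := fun N => rfl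
  -- find dyadic level of t
  have hlog : ∀ t ∈ Icc 1 (2 * 2 ^ L - 1),
      Nat.log 2 t ≤ L ∧ 2 ^ Nat.log 2 t ≤ t ∧ t < 2 ^ (Nat.log 2 t + 1) := by
    intro t ht
    rw [mem_Icc] at ht
    have h1 : 2 ^ Nat.log 2 t ≤ t := Nat.pow_log_le_self 2 (by omega)
    have h2 : t < 2 ^ (Nat.log 2 t + 1) := Nat.lt_pow_succ_log_self one_lt_two t
    refine ⟨?_, h1, h2⟩
    by_contra h
    have : 2 ^ (L + 1) ≤ 2 ^ Nat.log 2 t := Nat.pow_le_pow_right (by norm_num) (by omega)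
    omega
  -- interval membership facts
  have hmemI : ∀ j ≤ L, ∀ t ∈ Ioc (2 ^ j - 1) (2 ^ (j + 1) - 1),
      2 ^ j ≤ t ∧ t < 2 ^ (j + 1) ∧ t ∈ Icc 1 (2 * 2 ^ L - 1) := by
    intro j hj t ht
    rw [mem_Ioc] at ht
    have hp : (1:ℕ) ≤ 2 ^ j := Nat.one_le_two_pow
    have hq : (1:ℕ) ≤ 2 ^ (j + 1) := Nat.one_le_two_pow
    have hle : (2:ℕ) ^ (j + 1) ≤ 2 ^ (L + 1) := Nat.pow_le_pow_right (by norm_num) (by omega)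
    exact ⟨by omega, by omega, by rw [mem_Icc]; omega⟩
  have hBmem : ∀ j ≤ L, (2 : ℕ) ^ (j + 1) ∈ Icc 1 (2 * 2 ^ L) := by
    intro j hj
    have hle : (2:ℕ) ^ (j + 1) ≤ 2 ^ (L + 1) := Nat.pow_le_pow_right (by norm_num) (by omega)
    rw [mem_Icc]
    exact ⟨Nat.one_le_two_pow, by omega⟩
  have hsub : ∀ t, t ∈ Icc 1 (2 * 2 ^ L - 1) → t ∈ Icc 1 (2 * 2 ^ L) := by
    intro t ht; rw [mem_Icc] at *; omega
  -- claim 1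
  have claim1 : ∀ i ∈ Icc 1 n, ∀ t ∈ Icc 1 (2 * 2 ^ L - 1), xhat i t ∈ Set.Icc (0 : ℝ) 1 := by
    intro i hi t ht
    obtain ⟨hjL, h1, h2⟩ := hlog t ht
    rw [hxhat i (Nat.log 2 t) hjL t h1 h2]
    obtain ⟨ha, hb⟩ := hxbar01 i hi (Nat.log 2 t) (by simp [hjL])
    have hp : (1:ℝ) ≤ 2 ^ Nat.log 2 t := one_le_pow₀ one_le_two
    constructor
    · positivity
    · rw [div_le_one (by positivity)]; exact hb.trans hp
  -- partial sums of xhat over dyadic prefixes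
  have hcard : ∀ j : ℕ, ((2:ℕ) ^ (j + 1) - 1) - (2 ^ j - 1) = 2 ^ j := by
    intro j
    have : (2:ℕ) ^ (j + 1) = 2 * 2 ^ j := by rw [pow_succ]; ring
    have hp : (1:ℕ) ≤ 2 ^ j := Nat.one_le_two_pow
    omega
  have hconst : ∀ (i : ℕ) (g : ℕ → ℝ), ∀ j ≤ L, ∀ c : ℝ,
      (∀ t ∈ Ioc (2 ^ j - 1) (2 ^ (j + 1) - 1), g t = c) →
      ∑ t ∈ Ioc (2 ^ j - 1) (2 ^ (j + 1) - 1), g t = (2:ℝ) ^ j * c := by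
    intro i g j hj c hg
    rw [Finset.sum_congr rfl hg, Finset.sum_const, Nat.card_Ioc, hcard j,
      nsmul_eq_mul]
    push_cast
    ring
  have hpartial : ∀ i, ∀ j ≤ L,
      ∑ t ∈ Icc 1 (2 ^ (j + 1) - 1), xhat i t = ∑ j' ∈ Icc 0 j, xbar i j' := by
    intro i j hj
    rw [hIcc, pow_split]
    refine Finset.sum_congr rfl fun j' hj' => ?_
    rw [mem_Icc] at hj'
    have hj'L : j' ≤ L := le_trans hj'.2 hj
    have := hconst i (xhat i) j' hj'L (xbar i j' / 2 ^ j') (fun t ht => by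
      obtain ⟨h1, h2, _⟩ := hmemI j' hj'L t ht
      exact hxhat i j' hj'L t h1 h2)
    rw [this]
    have hp : (0:ℝ) < 2 ^ j' := by positivity
    field_simp
  -- claim 2
  have claim2 : ∀ i ∈ Icc 1 n, ∑ t ∈ Icc 1 (2 * 2 ^ L - 1), xhat i t ≤ 1 := by
    intro i hi
    have := hpartial i L le_rfl
    rw [h2L, this]
    exact hxbarsum i hi
  refine ⟨claim1, claim2, ?_, ?_⟩
  -- claim 3
  · intro t ht
    obtain ⟨hjL, h1, h2⟩ := hlog t ht
    set j := Nat.log 2 t with hjdef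
    have key : ∀ i ∈ Icc 1 n, ∑ t' ∈ Icc 1 t, xhat i t' * m i t
        ≤ ∑ j' ∈ Icc 0 j, xbar i j' * m i (2 ^ (j + 1)) := by
      intro i hi
      rw [← Finset.sum_mul, ← Finset.sum_mul]
      have hA : ∑ t' ∈ Icc 1 t, xhat i t' ≤ ∑ j' ∈ Icc 0 j, xbar i j' := by
        rw [← hpartial i j hjL]
        apply Finset.sum_le_sum_of_subset_of_nonneg
        · intro x hx
          rw [mem_Icc] at *
          omega
        · intro x hx _
          have hx' : x ∈ Icc 1 (2 * 2 ^ L - 1) := by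
            rw [mem_Icc] at *
            have hle : (2:ℕ) ^ (j + 1) ≤ 2 ^ (L + 1) := Nat.pow_le_pow_right (by norm_num) (by omega)
            omega
          exact (claim1 i hi x hx').1
      have hA0 : 0 ≤ ∑ t' ∈ Icc 1 t, xhat i t' := by
        apply Finset.sum_nonneg
        intro x hx
        have hx' : x ∈ Icc 1 (2 * 2 ^ L - 1) := by
          rw [mem_Icc] at *; omega
        exact (claim1 i hi x hx').1
      have hB0 : 0 ≤ ∑ j' ∈ Icc 0 j, xbar i j' := le_trans hA0 hA
      have hmm : m i t ≤ m i (2 ^ (j + 1)) :=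
        hm_mono i hi t (hsub t ht) _ (hBmem j hjL) (by omega)
      have hm0 : 0 ≤ m i t := hm_nonneg i hi t (hsub t ht)
      exact mul_le_mul hA hmm hm0 hB0
    calc ∑ i ∈ Icc 1 n, ∑ t' ∈ Icc 1 t, xhat i t' * m i t
        ≤ ∑ i ∈ Icc 1 n, ∑ j' ∈ Icc 0 j, xbar i j' * m i (2 ^ (j + 1)) :=
          Finset.sum_le_sum key
      _ ≤ c' * (2:ℝ) ^ j := hxbarload j (by simp [hjL])
      _ ≤ c' * (t : ℝ) := by
          apply mul_le_mul_of_nonneg_left _ hc'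
          exact_mod_cast h1
  -- claim 4
  · apply Finset.sum_le_sum
    intro i hi
    rw [h2L, hIcc, pow_split]
    apply Finset.sum_le_sum
    intro j hj
    rw [mem_Icc] at hj
    have hjL := hj.2
    obtain ⟨hx0, hx1⟩ := hxbar01 i hi j (by simp [hjL])
    have hp : (0:ℝ) < 2 ^ j := by positivity
    calc ER i (2 ^ (j + 1)) * xbar i j
        = (2:ℝ) ^ j * (ER i (2 ^ (j + 1)) * (xbar i j / 2 ^ j)) := by field_simp
      _ ≤ ∑ t ∈ Ioc (2 ^ j - 1) (2 ^ (j + 1) - 1), ER i t * xhat i t := by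
          rw [← hconst i (fun t => ER i (2 ^ (j + 1)) * (xbar i j / 2 ^ j)) j hjL _ (fun t _ => rfl)]
          apply Finset.sum_le_sum
          intro t ht
          obtain ⟨h1, h2, hmem⟩ := hmemI j hjL t ht
          rw [hxhat i j hjL t h1 h2]
          apply mul_le_mul_of_nonneg_right _ (by positivity)
          exact hER_mono i hi t (hsub t hmem) _ (hBmem j hjL) (by omega)
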